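/- (Safety of the unicycle under the second-order HOCBF constraint on u₂.) Let r > 0. Along any solution of the unicycle model, suppose ρ(0) − r ≥ 0, ρ'(0) + ρ(0) − r ≥ 0, and suppose the control u₂ satisfies for all t ≥ 0 the HOCBF-QP constraint (p/(M·ρ))·u₂ + v²/ρ + v·φ·q/ρ − v²·p²/ρ³ + 2·v·p/ρ + ρ − r ≥ 0 (all functions evaluated at t). Then ρ(t) ≥ r for all t ≥ 0, i.e., the safety constraint √((x−x₀)² + (y−y₀)²) ≥ r is satisfied for all t ≥ 0. -/

import Mathlib

lemma gronwall_nonneg (f f' : ℝ → ℝ) (hf : ∀ t, HasDerivAt f (f' t) t)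
    (h0 : 0 ≤ f 0) (hineq : ∀ t, 0 ≤ t → 0 ≤ f' t + f t) :
    ∀ t, 0 ≤ t → 0 ≤ f t := by
  intro t ht
  have hg : ∀ s : ℝ, HasDerivAt (fun u => Real.exp u * f u)
      (Real.exp s * (f' s + f s)) s := by
    intro s
    have h := (Real.hasDerivAt_exp s).mul (hf s)
    exact h.congr_deriv (by ring)
  have hcont : Continuous fun u => Real.exp u * f u :=
    Real.continuous_exp.mul (Differentiable.continuous (fun s => (hf s).differentiableAt))
  have hmono : MonotoneOn (fun u => Real.exp u * f u) (Set.Ici 0) := by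
    apply monotoneOn_of_deriv_nonneg (convex_Ici 0) hcont.continuousOn
    · intro s hs
      exact ((hg s).differentiableAt).differentiableWithinAt
    · intro s hs
      rw [(hg s).deriv]
      have hs' : (0:ℝ) ≤ s := le_of_lt (by simpa using hs)
      exact mul_nonneg (Real.exp_pos s).le (hineq s hs')
  have h01 : Real.exp 0 * f 0 ≤ Real.exp t * f t :=
    hmono Set.self_mem_Ici ht ht
  rw [Real.exp_zero, one_mul] at h01
  have : 0 ≤ Real.exp t * f t := le_trans h0 h01
  exact nonneg_of_mul_nonneg_right this (Real.exp_pos t)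

/-- Safety of the unicycle under the second-order HOCBF constraint on `u₂`:
if the initial conditions `ρ 0 − r ≥ 0`, `ρ' 0 + ρ 0 − r ≥ 0` hold and the
HOCBF-QP constraint holds for all `t ≥ 0`, then `ρ t ≥ r` for all `t ≥ 0`. -/
theorem unicycle_safety_second_order_hocbf
    (r : ℝ) (hr : 0 < r)
    (M : ℝ) (hM : 0 < M)
    (x y v θ φ u₁ u₂ : ℝ → ℝ)
    (hx : Differentiable ℝ x) (hy : Differentiable ℝ y)
    (hv : Differentiable ℝ v) (hθ : Differentiable ℝ θ)
    (hφ : Differentiable ℝ φ)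
    (hu₁ : Continuous u₁) (hu₂ : Continuous u₂)
    (hdx : ∀ t, deriv x t = v t * Real.cos (θ t))
    (hdy : ∀ t, deriv y t = v t * Real.sin (θ t))
    (hdv : ∀ t, deriv v t = u₂ t / M)
    (hdθ : ∀ t, deriv θ t = φ t)
    (hdφ : ∀ t, deriv φ t = u₁ t)
    (x₀ y₀ : ℝ) (ρ p q : ℝ → ℝ)
    (hρ : ∀ t, ρ t = Real.sqrt ((x t - x₀) ^ 2 + (y t - y₀) ^ 2))
    (hp : ∀ t, p t = (x t - x₀) * Real.cos (θ t) + (y t - y₀) * Real.sin (θ t))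
    (hq : ∀ t, q t = -(x t - x₀) * Real.sin (θ t) + (y t - y₀) * Real.cos (θ t))
    (hρpos : ∀ t, 0 < ρ t)
    (hinit0 : ρ 0 - r ≥ 0)
    (hinit1 : deriv ρ 0 + ρ 0 - r ≥ 0)
    (hconstr : ∀ t : ℝ, 0 ≤ t →
      (p t / (M * ρ t)) * u₂ t + (v t) ^ 2 / ρ t
        + v t * φ t * q t / ρ t
        - (v t) ^ 2 * (p t) ^ 2 / (ρ t) ^ 3
        + 2 * (v t * p t / ρ t) + ρ t - r ≥ 0) :
    ∀ t : ℝ, 0 ≤ t →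
      Real.sqrt ((x t - x₀) ^ 2 + (y t - y₀) ^ 2) ≥ r := by
  have hρne : ∀ t, ρ t ≠ 0 := fun t => (hρpos t).ne'
  have hsne : ∀ t, (x t - x₀) ^ 2 + (y t - y₀) ^ 2 ≠ 0 := by
    intro t
    have h := hρpos t
    rw [hρ t] at h
    exact (Real.sqrt_pos.mp h).ne'
  -- derivative of ρ
  have hρfun : ρ = fun t => Real.sqrt ((x t - x₀) ^ 2 + (y t - y₀) ^ 2) := funext hρ
  have hρ' : ∀ t, HasDerivAt ρ (v t * p t / ρ t) t := by
    intro t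
    have hsd : HasDerivAt (fun u => (x u - x₀) ^ 2 + (y u - y₀) ^ 2)
        (2 * (x t - x₀) * deriv x t + 2 * (y t - y₀) * deriv y t) t := by
      have h1 := (((hx t).hasDerivAt).sub_const x₀).pow 2
      have h2 := (((hy t).hasDerivAt).sub_const x₀).pow 2
      -- careful: second should be y₀
      have h2' := (((hy t).hasDerivAt).sub_const y₀).pow 2
      exact (h1.add h2').congr_deriv (by push_cast; ring)
    have := hsd.sqrt (hsne t)
    rw [← hρfun] at this
    convert this using 1
    rw [hdx, hdy, hp, hρ]
    have : Real.sqrt ((x t - x₀) ^ 2 + (y t - y₀) ^ 2) ≠ 0 := by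
      rw [← hρ]; exact hρne t
    field_simp
  -- derivative of p
  have hp' : ∀ t, HasDerivAt p (v t + φ t * q t) t := by
    intro t
    have hpfun : p = fun u => (x u - x₀) * Real.cos (θ u) + (y u - y₀) * Real.sin (θ u) :=
      funext hp
    have hcosd : HasDerivAt (fun u => Real.cos (θ u)) (-Real.sin (θ t) * deriv θ t) t :=
      (Real.hasDerivAt_cos (θ t)).comp t ((hθ t).hasDerivAt)
    have hsind : HasDerivAt (fun u => Real.sin (θ u)) (Real.cos (θ t) * deriv θ t) t :=
      (Real.hasDerivAt_sin (θ t)).comp t ((hθ t).hasDerivAt)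
    have h := ((((hx t).hasDerivAt).sub_const x₀).mul hcosd).add
      ((((hy t).hasDerivAt).sub_const y₀).mul hsind)
    replace h : HasDerivAt (fun u => (x u - x₀) * Real.cos (θ u) + (y u - y₀) * Real.sin (θ u)) _ t := h
    rw [← hpfun] at h
    convert h using 1
    rw [hdx, hdy, hdθ, hq]
    linear_combination (-(v t)) * Real.sin_sq_add_cos_sq (θ t)
  -- second derivative of ρ
  set ρ' : ℝ → ℝ := fun t => v t * p t / ρ t with hρ'def
  set D : ℝ → ℝ := fun t =>
    ((deriv v t * p t + v t * (v t + φ t * q t)) * ρ t - v t * p t * (v t * p t / ρ t)) / (ρ t) ^ 2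
    with hDdef
  have hρ'' : ∀ t, HasDerivAt ρ' (D t) t := by
    intro t
    have hnum : HasDerivAt (fun u => v u * p u)
        (deriv v t * p t + v t * (v t + φ t * q t)) t :=
      ((hv t).hasDerivAt).mul (hp' t)
    have hden : HasDerivAt ρ (v t * p t / ρ t) t := hρ' t
    have h := hnum.div hden (hρne t)
    exact h
  -- key inequality: D + 2 ρ' + ρ - r ≥ 0 for t ≥ 0
  have hkey : ∀ t, 0 ≤ t → 0 ≤ D t + ρ' t + (ρ' t + ρ t - r) := by
    intro t ht
    have hc := hconstr t ht
    have heq : D t + ρ' t + (ρ' t + ρ t - r) =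
        (p t / (M * ρ t)) * u₂ t + (v t) ^ 2 / ρ t
        + v t * φ t * q t / ρ t
        - (v t) ^ 2 * (p t) ^ 2 / (ρ t) ^ 3
        + 2 * (v t * p t / ρ t) + ρ t - r := by
      simp only [hDdef, hρ'def, hdv]
      have h1 := hρne t
      have h2 := hM.ne'
      field_simp
      ring
    rw [heq]
    exact hc
  -- first Gronwall: ψ₁ = ρ' + ρ - r ≥ 0
  have hψderiv : ∀ t, HasDerivAt (fun u => ρ' u + ρ u - r) (D t + ρ' t) t := by
    intro t
    exact ((hρ'' t).add (hρ' t)).sub_const r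
  have hψ0 : 0 ≤ ρ' 0 + ρ 0 - r := by
    have : deriv ρ 0 = ρ' 0 := (hρ' 0).deriv
    linarith [hinit1, this.symm.le, this.le]
  have hψ : ∀ t, 0 ≤ t → 0 ≤ ρ' t + ρ t - r :=
    gronwall_nonneg (fun u => ρ' u + ρ u - r) (fun t => D t + ρ' t) hψderiv hψ0 hkey
  -- second Gronwall: b = ρ - r ≥ 0
  have hbderiv : ∀ t, HasDerivAt (fun u => ρ u - r) (ρ' t) t := fun t => (hρ' t).sub_const r
  have hb : ∀ t, 0 ≤ t → 0 ≤ ρ t - r := by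
    apply gronwall_nonneg (fun u => ρ u - r) ρ' hbderiv hinit0
    intro t ht
    have := hψ t ht
    linarith
  intro t ht
  have := hb t ht
  rw [← hρ t]
  linarith
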